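/- LLPO * LLPO is not continuously Weihrauch reducible to LLPO, i.e., LLPO * LLPO ≤*_W LLPO fails. -/

import Mathlib

/-- Baire space. -/
abbrev Baire := ℕ → ℕ

/-- A problem: a partial multivalued function on Baire space, given as the
solution-set map; the domain is the set of instances with nonempty solution set. -/
def Problem := Baire → Set Baire

/-- Domain of a problem. -/
def Dom (f : Problem) : Set Baire := {x | (f x).Nonempty}

/-- A standard computable pairing of two sequences (interleaving). -/
def pair (x y : Baire) : Baire := fun n => if n % 2 = 0 then x (n / 2) else y (n / 2)

/-- Initial segment of length `m` of a sequence. -/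
def initSeg (x : Baire) (m : ℕ) : List ℕ := (List.range m).map x

/-- `F` is (the restriction to `D` of) a partial computable function on Baire space:
there is a computable monotone oracle functional computing `F x` from prefixes of `x`,
correctly and consistently, for every `x ∈ D`. -/
def ComputableOn (F : Baire → Baire) (D : Set Baire) : Prop :=
  ∃ φ : List ℕ → ℕ → Option ℕ, Computable₂ φ ∧
    ∀ x ∈ D, ∀ n : ℕ,
      (∃ m, φ (initSeg x m) n = some (F x n)) ∧
      (∀ m v, φ (initSeg x m) n = some v → v = F x n)

/-- Weihrauch reducibility `f ≤_W g`, with the partial computable forward functional `k`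
defined on `Dom f` and the partial computable backward functional `h` defined on all
pairs `⟨x, y⟩` with `x ∈ Dom f` and `y` a `g`-solution of `k x`. -/
def WRed (f g : Problem) : Prop :=
  ∃ h k : Baire → Baire,
    ComputableOn k (Dom f) ∧
    ComputableOn h {p | ∃ x ∈ Dom f, ∃ y ∈ g (k x), p = pair x y} ∧
    ∀ x ∈ Dom f, k x ∈ Dom g ∧ ∀ y ∈ g (k x), h (pair x y) ∈ f x

/-- Weihrauch equivalence. -/
def WEquiv (f g : Problem) : Prop := WRed f g ∧ WRed g f

/-- Continuous Weihrauch reducibility `f ≤*_W g`: as `WRed` but the functionals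
need only be partial continuous (continuous on their domains, Baire space carrying
the product topology). -/
def ContWRed (f g : Problem) : Prop :=
  ∃ h k : Baire → Baire,
    ContinuousOn k (Dom f) ∧
    ContinuousOn h {p | ∃ x ∈ Dom f, ∃ y ∈ g (k x), p = pair x y} ∧
    ∀ x ∈ Dom f, k x ∈ Dom g ∧ ∀ y ∈ g (k x), h (pair x y) ∈ f x

/-- Continuous Weihrauch equivalence. -/
def ContWEquiv (f g : Problem) : Prop := ContWRed f g ∧ ContWRed g f

/-- Composition of problems: `dom (f ∘ g) = {x ∈ dom g : g x ⊆ dom f}` and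
`(f ∘ g) x = {z : ∃ y ∈ g x, z ∈ f y}`. -/
def pcomp (f g : Problem) : Problem :=
  fun x => {z | g x ⊆ Dom f ∧ ∃ y ∈ g x, z ∈ f y}

/-- The identity problem. -/
def idp : Problem := fun x => {x}

/-- `p` is (a representative of) the compositional product `f * g`: the maximum,
with respect to `≤_W`, of `{f' ∘ g' : f' ≤_W f, g' ≤_W g}`. -/
def IsCompProd (f g p : Problem) : Prop :=
  (∃ f' g', WRed f' f ∧ WRed g' g ∧ WEquiv p (pcomp f' g')) ∧
  (∀ f' g', WRed f' f → WRed g' g → WRed (pcomp f' g') p)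

/-- `IsIter f n p` : `p` is (a representative of) `f^[n]`, the compositional product of
`n` copies of `f`, with `f^[0] := id`. -/
def IsIter (f : Problem) : ℕ → Problem → Prop
  | 0, p => p = idp
  | n + 1, p => ∃ q, IsIter f n q ∧ IsCompProd f q p

/-- The constant sequence with value `n`. -/
def cseq (n : ℕ) : Baire := fun _ => n

/-- The limited principle of omniscience. -/
def LPO : Problem := fun x =>
  {y | ((∃ n, x n = 0) ∧ y = cseq 0) ∨ ((∀ n, x n ≠ 0) ∧ y = cseq 1)}

/-- The lesser limited principle of omniscience. -/
def LLPO : Problem := fun x =>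
  {y | (∀ i j, x i ≠ 0 → x j ≠ 0 → i = j) ∧
       ((y = cseq 0 ∧ ∀ i, Even i → x i = 0) ∨
        (y = cseq 1 ∧ ∀ i, Odd i → x i = 0))}

/-- Turing reducibility between points of Baire space: `x` is computable from
oracle `y`. -/
def TuringLE (x y : Baire) : Prop :=
  ∃ φ : List ℕ → ℕ → Option ℕ, Computable₂ φ ∧
    ∀ n : ℕ, (∃ m, φ (initSeg y m) n = some (x n)) ∧
      (∀ m v, φ (initSeg y m) n = some v → v = x n)

/-- Mutual Turing reducibility: `x` and `y` have the same Turing degree. -/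
def TuringEquiv (x y : Baire) : Prop := TuringLE x y ∧ TuringLE y x

/-- Strict Turing reducibility. -/
def TuringLT (x y : Baire) : Prop := TuringLE x y ∧ ¬ TuringLE y x

/-- The problem `w_a`, for `a` a representative of a (non-zero) Turing degree. -/
def w (a : Baire) : Problem := fun x =>
  {y | (Computable x ∧ ¬ Computable y) ∨ (¬ Computable x ∧ TuringEquiv y a)}

/-- `k`-weak continuity of a problem. -/
def WeaklyContinuous (k : ℕ) (f : Problem) : Prop :=
  ∀ x ∈ Dom f, ∀ y : ℕ → Baire, (∀ n, y n ∈ Dom f) →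
    Filter.Tendsto y Filter.atTop (nhds x) →
    ∃ u ∈ f x, ∀ l < k, ∀ m : ℕ, ∃ n ≥ m,
      ∃ v ∈ f (y (n * k + l)), initSeg u m = initSeg v m

/-- Product of two problems. -/
def prodP (f g : Problem) : Problem := fun z =>
  {w | ∃ x y u v, z = pair x y ∧ w = pair u v ∧ u ∈ f x ∧ v ∈ g y}

/-- `powP f n` : the product of `n` copies of `f` (for `n ≥ 1`). -/
def powP (f : Problem) : ℕ → Problem
  | 0 => idp
  | 1 => f
  | n + 2 => prodP f (powP f (n + 1))

/-- A problem `f` is `k`-continuous: it has a realizer `r` (defined on a domain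
`D ⊇ Dom f`) together with a partition of `D` into at most `k` pieces (given by a
coloring `c`) such that `r` is continuous on each piece. -/
def kContinuous (k : ℕ) (f : Problem) : Prop :=
  ∃ (D : Set Baire) (r : Baire → Baire) (c : Baire → Fin k),
    Dom f ⊆ D ∧ (∀ x ∈ Dom f, r x ∈ f x) ∧
    ∀ i : Fin k, ContinuousOn r {x ∈ D | c x = i}

open Filter Topology

lemma initSeg_get? (x : Baire) (m i : ℕ) :
    (initSeg x m)[i]? = if i < m then some (x i) else none := by
  rcases lt_or_ge i m with h | h
  · simp [initSeg, List.getElem?_map, List.getElem?_range, h]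
  · simp [initSeg, List.getElem?_map, List.getElem?_range, h,
      Nat.not_lt.mpr h]

lemma initSeg_eq_of_agree {x y : Baire} {m : ℕ} (h : ∀ i < m, y i = x i) :
    initSeg y m = initSeg x m := by
  unfold initSeg
  apply List.map_congr_left
  intro a ha
  exact h a (List.mem_range.mp ha)

lemma cylinder_mem_nhds (x : Baire) (m : ℕ) :
    {y : Baire | ∀ i < m, y i = x i} ∈ 𝓝 x := by
  rw [nhds_pi, Filter.mem_pi]
  refine ⟨Set.Iio m, Set.finite_Iio m, fun i => {x i}, fun i => ?_, ?_⟩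
  · simp [nhds_discrete]
  · intro y hy i hi
    exact hy i hi

lemma exists_cyl_subset {x : Baire} {U : Set Baire} (hU : U ∈ 𝓝 x) :
    ∃ M, ∀ y : Baire, (∀ i < M, y i = x i) → y ∈ U := by
  rw [nhds_pi, Filter.mem_pi] at hU
  obtain ⟨I, hIf, t, ht, hsub⟩ := hU
  refine ⟨(hIf.toFinset.sup id) + 1, fun y hy => hsub ?_⟩
  intro i hi
  have hiI : i ∈ hIf.toFinset := hIf.mem_toFinset.mpr hi
  have : i < hIf.toFinset.sup id + 1 :=
    Nat.lt_succ_of_le (Finset.le_sup (f := id) hiI)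
  rw [hy i this]
  exact mem_of_mem_nhds (ht i)

lemma contOn_extract {F : Baire → Baire} {D : Set Baire} {x : Baire}
    (hF : ContinuousOn F D) (hx : x ∈ D) (L : ℕ) :
    ∃ M, ∀ y ∈ D, (∀ i < M, y i = x i) → ∀ i < L, F y i = F x i := by
  have h1 : ContinuousWithinAt F D x := hF x hx
  have hV : {z : Baire | ∀ i < L, z i = F x i} ∈ 𝓝 (F x) := cylinder_mem_nhds _ _
  have h2 := h1 hV
  rw [Filter.mem_map, mem_nhdsWithin] at h2
  obtain ⟨U, hUo, hxU, hsub⟩ := h2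
  obtain ⟨M, hM⟩ := exists_cyl_subset (hUo.mem_nhds hxU)
  exact ⟨M, fun y hyD hagree => hsub ⟨hM y hagree, hyD⟩⟩

lemma computableOn_continuousOn {F : Baire → Baire} {D : Set Baire}
    (h : ComputableOn F D) : ContinuousOn F D := by
  obtain ⟨φ, -, hφ⟩ := h
  intro x hx
  rw [continuousWithinAt_pi]
  intro n
  obtain ⟨m, hm⟩ := (hφ x hx n).1
  have hC : {y : Baire | ∀ i < m, y i = x i} ∈ 𝓝[D] x :=
    nhdsWithin_le_nhds (cylinder_mem_nhds x m)
  have hev : ∀ᶠ y in 𝓝[D] x, F y n = F x n := by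
    filter_upwards [hC, self_mem_nhdsWithin] with y hy hyD
    have : φ (initSeg y m) n = some (F x n) := by
      rw [initSeg_eq_of_agree hy]; exact hm
    exact ((hφ y hyD n).2 m _ this).symm
  exact (tendsto_const_nhds : Filter.Tendsto (fun _ : Baire => F x n) (𝓝[D] x) _).congr' (by filter_upwards [hev] with y h using h.symm)

/-- Extract first component of an interleaved pair. -/
def fstB (p : Baire) : Baire := fun n => p (2 * n)

/-- Extract second component of an interleaved pair. -/
def sndB (p : Baire) : Baire := fun n => p (2 * n + 1)

lemma fstB_pair (x y : Baire) : fstB (pair x y) = x := by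
  funext n
  simp [fstB, pair, Nat.mul_div_cancel_left]

lemma sndB_pair (x y : Baire) : sndB (pair x y) = y := by
  funext n
  have h1 : (2 * n + 1) % 2 = 1 := by omega
  have h2 : (2 * n + 1) / 2 = n := by omega
  simp [sndB, pair, h1, h2]

/-- Precomposition with an index transform. -/
def mapIdx (G : ℕ → ℕ) (x : Baire) : Baire := fun n => x (G n)

lemma computableOn_mapIdx (G : ℕ → ℕ) (hG : Computable G) (D : Set Baire) :
    ComputableOn (mapIdx G) D := by
  refine ⟨fun σ n => σ[G n]?, ?_, ?_⟩
  · exact Computable.list_getElem?.comp Computable.fst (hG.comp Computable.snd)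
  · intro x _ n
    constructor
    · refine ⟨G n + 1, ?_⟩
      show (initSeg x (G n + 1))[G n]? = some (mapIdx G x n)
      rw [initSeg_get?, if_pos (Nat.lt_succ_self _)]; rfl
    · intro m v hv
      replace hv : (initSeg x m)[G n]? = some v := hv
      rw [initSeg_get?] at hv
      by_cases h : G n < m
      · rw [if_pos h] at hv; exact (Option.some.inj hv).symm
      · rw [if_neg h] at hv; exact absurd hv (by simp)

lemma continuous_fstB : Continuous fstB := continuous_pi fun n => continuous_apply (2 * n)

lemma continuous_sndB : Continuous sndB := continuous_pi fun n => continuous_apply (2 * n + 1)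

lemma continuousOn_pairF {A B : Baire → Baire} {s : Set Baire}
    (hA : ContinuousOn A s) (hB : ContinuousOn B s) :
    ContinuousOn (fun p => pair (A p) (B p)) s := by
  rw [continuousOn_pi]
  intro n
  by_cases hn : n % 2 = 0
  · have hc : ContinuousOn (fun y => A y (n / 2)) s := (continuous_apply (n / 2)).comp_continuousOn hA
    simpa [pair, hn] using hc
  · have hc : ContinuousOn (fun y => B y (n / 2)) s := (continuous_apply (n / 2)).comp_continuousOn hB
    simpa [pair, hn] using hc

lemma wred_contWRed {f g : Problem} (h : WRed f g) : ContWRed f g := by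
  obtain ⟨H, K, hK, hH, hR⟩ := h
  exact ⟨H, K, computableOn_continuousOn hK, computableOn_continuousOn hH, hR⟩

lemma contWRed_trans {f g h : Problem} (h1 : ContWRed f g) (h2 : ContWRed g h) :
    ContWRed f h := by
  obtain ⟨H1, K1, cK1, cH1, R1⟩ := h1
  obtain ⟨H2, K2, cK2, cH2, R2⟩ := h2
  refine ⟨fun p => H1 (pair (fstB p) (H2 (pair (K1 (fstB p)) (sndB p)))),
    fun x => K2 (K1 x), ?_, ?_, ?_⟩
  · exact cK2.comp cK1 (fun x hx => (R1 x hx).1)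
  · -- continuity of the backward map on its domain
    set DH : Set Baire := {p | ∃ x ∈ Dom f, ∃ y ∈ h ((fun x => K2 (K1 x)) x), p = pair x y}
    have hfst : ∀ p ∈ DH, fstB p ∈ Dom f := by
      rintro p ⟨x, hx, y, hy, rfl⟩; rwa [fstB_pair]
    have cK1f : ContinuousOn (fun p => K1 (fstB p)) DH :=
      cK1.comp continuous_fstB.continuousOn hfst
    have cinner : ContinuousOn (fun p => pair (K1 (fstB p)) (sndB p)) DH :=
      continuousOn_pairF cK1f continuous_sndB.continuousOn
    have hmaps2 : ∀ p ∈ DH, pair (K1 (fstB p)) (sndB p) ∈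
        {q | ∃ x ∈ Dom g, ∃ y ∈ h (K2 x), q = pair x y} := by
      rintro p ⟨x, hx, y, hy, rfl⟩
      rw [fstB_pair, sndB_pair]
      exact ⟨K1 x, (R1 x hx).1, y, hy, rfl⟩
    have cH2c : ContinuousOn (fun p => H2 (pair (K1 (fstB p)) (sndB p))) DH :=
      cH2.comp cinner hmaps2
    have couter : ContinuousOn (fun p => pair (fstB p) (H2 (pair (K1 (fstB p)) (sndB p)))) DH :=
      continuousOn_pairF continuous_fstB.continuousOn cH2c
    have hmaps1 : ∀ p ∈ DH, pair (fstB p) (H2 (pair (K1 (fstB p)) (sndB p))) ∈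
        {q | ∃ x ∈ Dom f, ∃ y ∈ g (K1 x), q = pair x y} := by
      rintro p ⟨x, hx, y, hy, rfl⟩
      rw [fstB_pair, sndB_pair]
      exact ⟨x, hx, H2 (pair (K1 x) y),
        (R2 (K1 x) (R1 x hx).1).2 y hy, rfl⟩
    exact cH1.comp couter hmaps1
  · intro x hx
    refine ⟨(R2 (K1 x) (R1 x hx).1).1, fun z hz => ?_⟩
    simp only [fstB_pair, sndB_pair]
    exact (R1 x hx).2 _ ((R2 (K1 x) (R1 x hx).1).2 z hz)

lemma llpo_mem_cases {x y : Baire} (h : y ∈ LLPO x) : y = cseq 0 ∨ y = cseq 1 := by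
  rcases h.2 with ⟨h1, -⟩ | ⟨h1, -⟩
  · exact Or.inl h1
  · exact Or.inr h1

lemma cseq_zero_ne_one : cseq 0 ≠ cseq 1 := by
  intro h
  have := congrFun h 0
  simp [cseq] at this

lemma cseq0_mem_llpo_zero : cseq 0 ∈ LLPO (cseq 0) := by
  refine ⟨fun i j hi _ => absurd rfl hi, Or.inl ⟨rfl, fun _ _ => rfl⟩⟩

/-- The sequence with a single `1` at position `j`. -/
def eB (j : ℕ) : Baire := fun i => if i = j then 1 else 0

lemma eB_uniq (j : ℕ) : ∀ i i', eB j i ≠ 0 → eB j i' ≠ 0 → i = i' := by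
  intro i i' hi hi'
  have h1 : i = j := by by_contra h; simp [eB, h] at hi
  have h2 : i' = j := by by_contra h; simp [eB, h] at hi'
  rw [h1, h2]

lemma llpo_eB_eq {a t : ℕ} (ha : a ≤ 1) : LLPO (eB (2 * t + 1 - a)) = {cseq a} := by
  interval_cases a
  · -- position 2t+1, odd : answer cseq 0
    ext y
    simp only [Set.mem_singleton_iff]
    constructor
    · intro hy
      rcases hy.2 with ⟨h1, -⟩ | ⟨h1, hodd⟩
      · exact h1
      · exfalso
        have := hodd (2 * t + 1) ⟨t, by ring⟩
        simp [eB] at this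
    · rintro rfl
      refine ⟨eB_uniq _, Or.inl ⟨rfl, fun i hi => ?_⟩⟩
      obtain ⟨m, rfl⟩ := hi
      simp only [eB, Nat.add_sub_cancel]
      rw [if_neg (by omega)]
  · -- position 2t, even : answer cseq 1
    ext y
    simp only [Set.mem_singleton_iff]
    constructor
    · intro hy
      rcases hy.2 with ⟨h1, hev⟩ | ⟨h1, -⟩
      · exfalso
        have h0 := hev (2 * t) ⟨t, by ring⟩
        have h1' : eB (2 * t + 1 - 1) (2 * t) = 1 := by
          unfold eB; rw [if_pos (show 2 * t = 2 * t + 1 - 1 by omega)]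
        exact one_ne_zero (h1'.symm.trans h0)
      · exact h1
    · rintro rfl
      refine ⟨eB_uniq _, Or.inr ⟨rfl, fun i hi => ?_⟩⟩
      obtain ⟨m, rfl⟩ := hi
      unfold eB
      rw [if_neg (show ¬ (2 * m + 1 = 2 * t + 1 - 1) by omega)]

/-- The inner reduction piece: solve LLPO on the first component, pass along the second. -/
def gP : Problem := fun p => {q | ∃ y ∈ LLPO (fstB p), q = pair y (sndB p)}

/-- The outer reduction piece: solve LLPO on the second component, keep the first. -/
def fP : Problem := fun q => {r | ∃ v ∈ LLPO (sndB q), r = pair (fstB q) v}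

lemma hGh_eq (x y : Baire) :
    mapIdx (fun n => if n % 2 = 0 then n + 1 else 2 * n) (pair x y) = pair y (sndB x) := by
  funext n
  by_cases hn : n % 2 = 0
  · have h1 : (n + 1) % 2 = 1 := by omega
    have h2 : (n + 1) / 2 = n / 2 := by omega
    simp [mapIdx, pair, sndB, hn, h1, h2]
  · have h1 : (2 * n) % 2 = 0 := by omega
    have h2 : (2 * n) / 2 = n := by omega
    have h3 : 2 * (n / 2) + 1 = n := by omega
    simp [mapIdx, pair, sndB, hn, h1, h2, h3]

lemma hGf_eq (x y : Baire) :
    mapIdx (fun n => if n % 2 = 0 then 2 * n else n) (pair x y) = pair (fstB x) y := by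
  funext n
  by_cases hn : n % 2 = 0
  · have h1 : (2 * n) % 2 = 0 := by omega
    have h2 : (2 * n) / 2 = n := by omega
    have h3 : 2 * (n / 2) = n := by omega
    simp [mapIdx, pair, fstB, hn, h1, h2, h3]
  · simp [mapIdx, pair, fstB, hn]

lemma comp_even : Computable (fun n => 2 * n) :=
  Primrec.to_comp (Primrec.nat_mul.comp (Primrec.const 2) Primrec.id)

lemma comp_odd : Computable (fun n => 2 * n + 1) :=
  Primrec.to_comp (Primrec.succ.comp (Primrec.nat_mul.comp (Primrec.const 2) Primrec.id))

lemma comp_Gh : Computable (fun n => if n % 2 = 0 then n + 1 else 2 * n) := by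
  apply Primrec.to_comp
  exact Primrec.ite
    (Primrec.eq.comp (Primrec.nat_mod.comp Primrec.id (Primrec.const 2)) (Primrec.const 0))
    (Primrec.succ.comp Primrec.id)
    (Primrec.nat_mul.comp (Primrec.const 2) Primrec.id)

lemma comp_Gf : Computable (fun n => if n % 2 = 0 then 2 * n else n) := by
  apply Primrec.to_comp
  exact Primrec.ite
    (Primrec.eq.comp (Primrec.nat_mod.comp Primrec.id (Primrec.const 2)) (Primrec.const 0))
    (Primrec.nat_mul.comp (Primrec.const 2) Primrec.id)
    Primrec.id

lemma wred_gP : WRed gP LLPO := by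
  refine ⟨mapIdx (fun n => if n % 2 = 0 then n + 1 else 2 * n), mapIdx (fun n => 2 * n),
    computableOn_mapIdx _ comp_even _, computableOn_mapIdx _ comp_Gh _, ?_⟩
  intro x hx
  obtain ⟨q, y, hy, -⟩ := hx
  constructor
  · exact ⟨y, hy⟩
  · intro z hz
    rw [hGh_eq]
    exact ⟨z, hz, rfl⟩

lemma wred_fP : WRed fP LLPO := by
  refine ⟨mapIdx (fun n => if n % 2 = 0 then 2 * n else n), mapIdx (fun n => 2 * n + 1),
    computableOn_mapIdx _ comp_odd _, computableOn_mapIdx _ comp_Gf _, ?_⟩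
  intro x hx
  obtain ⟨q, v, hv, -⟩ := hx
  constructor
  · exact ⟨v, hv⟩
  · intro z hz
    rw [hGf_eq]
    exact ⟨z, hz, rfl⟩

/-- The composed problem. -/
def P2 : Problem := pcomp fP gP

lemma mem_P2_intro {p y v : Baire} (hy : y ∈ LLPO (fstB p)) (hv : v ∈ LLPO (sndB p)) :
    pair y v ∈ P2 p := by
  refine ⟨?_, pair y (sndB p), ⟨y, hy, rfl⟩, ?_⟩
  · rintro q ⟨y', hy', rfl⟩
    refine ⟨pair (fstB (pair y' (sndB p))) v, v, ?_, rfl⟩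
    rw [sndB_pair]; exact hv
  · refine ⟨v, ?_, ?_⟩
    · rw [sndB_pair]; exact hv
    · rw [fstB_pair]

lemma mem_P2_elim {p z : Baire} (h : z ∈ P2 p) :
    ∃ y ∈ LLPO (fstB p), ∃ v ∈ LLPO (sndB p), z = pair y v := by
  obtain ⟨-, q, ⟨y, hy, rfl⟩, v, hv, rfl⟩ := h
  rw [sndB_pair] at hv
  rw [fstB_pair]
  exact ⟨y, hy, v, hv, rfl⟩

lemma dom_P2 {p : Baire} (h1 : fstB p ∈ Dom LLPO) (h2 : sndB p ∈ Dom LLPO) :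
    p ∈ Dom P2 := by
  obtain ⟨y, hy⟩ := h1
  obtain ⟨v, hv⟩ := h2
  have hy' := llpo_mem_cases hy
  have hv' := llpo_mem_cases hv
  exact ⟨pair y v, mem_P2_intro hy hv⟩

lemma not_contWRed_P2 : ¬ ContWRed P2 LLPO := by
  rintro ⟨H, K, cK, cH, R⟩
  set x₀ : Baire := cseq 0 with hx₀def
  have hfst0 : fstB x₀ = cseq 0 := by rw [hx₀def]; funext n; rfl
  have hsnd0 : sndB x₀ = cseq 0 := by rw [hx₀def]; funext n; rfl
  have hx₀ : x₀ ∈ Dom P2 := by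
    refine dom_P2 ?_ ?_
    · rw [hfst0]; exact ⟨_, cseq0_mem_llpo_zero⟩
    · rw [hsnd0]; exact ⟨_, cseq0_mem_llpo_zero⟩
  obtain ⟨hk₀, hsol₀⟩ := R x₀ hx₀
  obtain ⟨y₀, hy₀⟩ := hk₀
  have huniq : ∀ i j, K x₀ i ≠ 0 → K x₀ j ≠ 0 → i = j := hy₀.1
  -- exclusion witnesses
  obtain ⟨W0, hW0⟩ : ∃ W0, cseq 0 ∉ LLPO (K x₀) → ∃ i < W0, i % 2 = 0 ∧ K x₀ i ≠ 0 := by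
    by_cases hc : cseq 0 ∈ LLPO (K x₀)
    · exact ⟨0, fun h => absurd hc h⟩
    · have hex : ∃ i, i % 2 = 0 ∧ K x₀ i ≠ 0 := by
        by_contra hno
        push_neg at hno
        exact hc ⟨huniq, Or.inl ⟨rfl, fun i hi => hno i (Nat.even_iff.mp hi)⟩⟩
      obtain ⟨i, hi⟩ := hex
      exact ⟨i + 1, fun _ => ⟨i, Nat.lt_succ_self i, hi⟩⟩
  obtain ⟨W1, hW1⟩ : ∃ W1, cseq 1 ∉ LLPO (K x₀) → ∃ i < W1, i % 2 = 1 ∧ K x₀ i ≠ 0 := by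
    by_cases hc : cseq 1 ∈ LLPO (K x₀)
    · exact ⟨0, fun h => absurd hc h⟩
    · have hex : ∃ i, i % 2 = 1 ∧ K x₀ i ≠ 0 := by
        by_contra hno
        push_neg at hno
        exact hc ⟨huniq, Or.inr ⟨rfl, fun i hi => hno i (Nat.odd_iff.mp hi)⟩⟩
      obtain ⟨i, hi⟩ := hex
      exact ⟨i + 1, fun _ => ⟨i, Nat.lt_succ_self i, hi⟩⟩
  obtain ⟨M₀, hM₀⟩ := contOn_extract cK hx₀ (W0 + W1)
  -- continuity of H at the two candidate solutions
  have keyH : ∀ y, y ∈ LLPO (K x₀) → ∃ N, ∀ x' ∈ Dom P2, (∀ i < N, x' i = x₀ i) →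
      y ∈ LLPO (K x') → ∀ i < 2, H (pair x' y) i = H (pair x₀ y) i := by
    intro y hy
    have hmem : pair x₀ y ∈ {p | ∃ x ∈ Dom P2, ∃ z ∈ LLPO (K x), p = pair x z} :=
      ⟨x₀, hx₀, y, hy, rfl⟩
    obtain ⟨N, hN⟩ := contOn_extract cH hmem 2
    refine ⟨N, fun x' hx' hagr hy' => hN (pair x' y) ⟨x', hx', y, hy', rfl⟩ ?_⟩
    intro i hi
    simp only [pair]
    by_cases h2 : i % 2 = 0
    · rw [if_pos h2, if_pos h2]
      exact hagr (i / 2) (by omega)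
    · rw [if_neg h2, if_neg h2]
  obtain ⟨Ma, hMa⟩ : ∃ Ma, cseq 0 ∈ LLPO (K x₀) → ∀ x' ∈ Dom P2,
      (∀ i < Ma, x' i = x₀ i) → cseq 0 ∈ LLPO (K x') →
      ∀ i < 2, H (pair x' (cseq 0)) i = H (pair x₀ (cseq 0)) i := by
    by_cases hc : cseq 0 ∈ LLPO (K x₀)
    · obtain ⟨N, hN⟩ := keyH _ hc; exact ⟨N, fun _ => hN⟩
    · exact ⟨0, fun hmem => absurd hmem hc⟩
  obtain ⟨Mb, hMb⟩ : ∃ Mb, cseq 1 ∈ LLPO (K x₀) → ∀ x' ∈ Dom P2,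
      (∀ i < Mb, x' i = x₀ i) → cseq 1 ∈ LLPO (K x') →
      ∀ i < 2, H (pair x' (cseq 1)) i = H (pair x₀ (cseq 1)) i := by
    by_cases hc : cseq 1 ∈ LLPO (K x₀)
    · obtain ⟨N, hN⟩ := keyH _ hc; exact ⟨N, fun _ => hN⟩
    · exact ⟨0, fun hmem => absurd hmem hc⟩
  set M := M₀ + Ma + Mb + 1 with hM
  -- every answer pattern is realized at x₀
  have main : ∀ a b : ℕ, a ≤ 1 → b ≤ 1 → ∃ y, (y = cseq 0 ∨ y = cseq 1) ∧
      H (pair x₀ y) 0 = a ∧ H (pair x₀ y) 1 = b := by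
    intro a b ha hb
    set x' : Baire := pair (eB (2 * M + 1 - a)) (eB (2 * M + 1 - b)) with hx'
    have hLf : LLPO (fstB x') = {cseq a} := by
      rw [hx', fstB_pair]; exact llpo_eB_eq ha
    have hLs : LLPO (sndB x') = {cseq b} := by
      rw [hx', sndB_pair]; exact llpo_eB_eq hb
    have hx'dom : x' ∈ Dom P2 := by
      refine dom_P2 ?_ ?_
      · show (LLPO (fstB x')).Nonempty
        rw [hLf]; exact Set.singleton_nonempty _
      · show (LLPO (sndB x')).Nonempty
        rw [hLs]; exact Set.singleton_nonempty _
    have hagree : ∀ i < M, x' i = x₀ i := by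
      intro i hi
      rw [hx', hx₀def]
      show (if i % 2 = 0 then eB (2 * M + 1 - a) (i / 2) else eB (2 * M + 1 - b) (i / 2)) = 0
      by_cases h2 : i % 2 = 0
      · rw [if_pos h2]
        show (if i / 2 = 2 * M + 1 - a then 1 else 0) = 0
        rw [if_neg (show ¬ i / 2 = 2 * M + 1 - a by omega)]
      · rw [if_neg h2]
        show (if i / 2 = 2 * M + 1 - b then 1 else 0) = 0
        rw [if_neg (show ¬ i / 2 = 2 * M + 1 - b by omega)]
    obtain ⟨hk', hsol'⟩ := R x' hx'dom
    obtain ⟨y', hy'⟩ := hk'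
    have hy'c := llpo_mem_cases hy'
    have hkag : ∀ i < W0 + W1, K x' i = K x₀ i :=
      hM₀ x' hx'dom (fun i hi => hagree i (by omega))
    have hy'0 : y' ∈ LLPO (K x₀) := by
      rcases hy'c with rfl | rfl
      · by_contra hc
        obtain ⟨i, hiW, hie, hine⟩ := hW0 hc
        rcases hy'.2 with ⟨-, hev⟩ | ⟨heq, -⟩
        · have h := hev i (Nat.even_iff.mpr hie)
          rw [hkag i (by omega)] at h
          exact hine h
        · exact cseq_zero_ne_one heq
      · by_contra hc
        obtain ⟨i, hiW, hie, hine⟩ := hW1 hc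
        rcases hy'.2 with ⟨heq, -⟩ | ⟨-, hodd⟩
        · exact cseq_zero_ne_one heq.symm
        · have h := hodd i (Nat.odd_iff.mpr hie)
          rw [hkag i (by omega)] at h
          exact hine h
    have hans := hsol' y' hy'
    obtain ⟨u, hu, v, hv, heq⟩ := mem_P2_elim hans
    rw [hLf, Set.mem_singleton_iff] at hu
    rw [hLs, Set.mem_singleton_iff] at hv
    subst hu; subst hv
    have h0' : H (pair x' y') 0 = a := by
      rw [heq]
      show (if 0 % 2 = 0 then cseq a (0 / 2) else cseq b (0 / 2)) = a
      norm_num [cseq]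
    have h1' : H (pair x' y') 1 = b := by
      rw [heq]
      show (if 1 % 2 = 0 then cseq a (1 / 2) else cseq b (1 / 2)) = b
      norm_num [cseq]
    rcases hy'c with rfl | rfl
    · have htr := hMa hy'0 x' hx'dom (fun i hi => hagree i (by omega)) hy'
      exact ⟨cseq 0, Or.inl rfl, by rw [← htr 0 (by omega)]; exact h0',
        by rw [← htr 1 (by omega)]; exact h1'⟩
    · have htr := hMb hy'0 x' hx'dom (fun i hi => hagree i (by omega)) hy'
      exact ⟨cseq 1, Or.inr rfl, by rw [← htr 0 (by omega)]; exact h0',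
        by rw [← htr 1 (by omega)]; exact h1'⟩
  obtain ⟨y1, hy1, h10, h11⟩ := main 0 0 (by omega) (by omega)
  obtain ⟨y2, hy2, h20, h21⟩ := main 0 1 (by omega) (by omega)
  obtain ⟨y3, hy3, h30, h31⟩ := main 1 0 (by omega) (by omega)
  rcases hy1 with rfl | rfl <;> rcases hy2 with rfl | rfl <;> rcases hy3 with rfl | rfl <;> omega

/-- `LLPO * LLPO` is not continuously Weihrauch reducible to `LLPO`. -/
theorem llpo_star_llpo_not_red_llpo (p : Problem) (hp : IsCompProd LLPO LLPO p) :
    ¬ ContWRed p LLPO := by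
  intro hred
  have h1 : WRed P2 p := hp.2 fP gP wred_fP wred_gP
  exact not_contWRed_P2 (contWRed_trans (wred_contWRed h1) hred)
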